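/- Let Γ be a group and H a subgroup. There exists a left H-invariant mean on ℓ∞(Γ, ℝ) if and only if there exists a non-trivial H-invariant continuous linear functional ξ on ℓ∞(Γ, ℝ). -/

import Mathlib

open scoped ENNReal

noncomputable section

/-- The space `ℓ∞(G, ℝ)` of bounded real-valued functions on `G`. -/
abbrev Linf (G : Type*) := lp (fun _ : G => ℝ) ∞

/-- `m` is a mean on `ℓ∞(G, ℝ)`. -/
def IsMean (G : Type*) (m : Linf G →ₗ[ℝ] ℝ) : Prop :=
  ∀ f : Linf G, sInf (Set.range (f : G → ℝ)) ≤ m f ∧ m f ≤ sSup (Set.range (f : G → ℝ))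

namespace InvMeanAux

variable {Γ : Type*} [Group Γ]

/-- The constant function as an element of `ℓ∞`. -/
def const (G : Type*) (c : ℝ) : Linf G :=
  ⟨fun _ => c, memℓp_infty ⟨‖c‖, by rintro r ⟨x, rfl⟩; simp⟩⟩

@[simp] lemma const_apply {G : Type*} (c : ℝ) (x : G) : (const G c) x = c := rfl

lemma abs_apply_le_norm (f : Linf Γ) (x : Γ) : |f x| ≤ ‖f‖ :=
  lp.norm_apply_le_norm ENNReal.top_ne_zero f x

variable (ξ : Linf Γ →L[ℝ] ℝ)

/-- The set of values of `ξ` on functions dominated by `f`. -/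
def S (f : Linf Γ) : Set ℝ := {r | ∃ g : Linf Γ, (∀ x, |g x| ≤ f x) ∧ ξ g = r}

lemma zero_mem_S {f : Linf Γ} (hf : ∀ x, 0 ≤ f x) : (0 : ℝ) ∈ S ξ f :=
  ⟨0, fun x => by simpa using hf x, map_zero ξ⟩

lemma bddAbove_S (f : Linf Γ) : BddAbove (S ξ f) := by
  refine ⟨‖ξ‖ * ‖f‖, ?_⟩
  rintro r ⟨g, hg, rfl⟩
  have hgle : ‖g‖ ≤ ‖f‖ := by
    refine lp.norm_le_of_forall_le (norm_nonneg f) fun x => ?_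
    calc ‖g x‖ = |g x| := Real.norm_eq_abs _
      _ ≤ f x := hg x
      _ ≤ |f x| := le_abs_self _
      _ ≤ ‖f‖ := abs_apply_le_norm f x
  calc ξ g ≤ ‖ξ g‖ := le_abs_self _
    _ ≤ ‖ξ‖ * ‖g‖ := ξ.le_opNorm g
    _ ≤ ‖ξ‖ * ‖f‖ := by
        exact mul_le_mul_of_nonneg_left hgle (norm_nonneg ξ)

/-- The "absolute value" of `ξ` on the nonnegative cone. -/
def q (f : Linf Γ) : ℝ := sSup (S ξ f)

lemma q_nonneg {f : Linf Γ} (hf : ∀ x, 0 ≤ f x) : 0 ≤ q ξ f :=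
  le_csSup (bddAbove_S ξ f) (zero_mem_S ξ hf)

lemma le_q {f g : Linf Γ} (hg : ∀ x, |g x| ≤ f x) : ξ g ≤ q ξ f :=
  le_csSup (bddAbove_S ξ f) ⟨g, hg, rfl⟩

lemma q_le {f : Linf Γ} (hf : ∀ x, 0 ≤ f x) {C : ℝ}
    (h : ∀ g : Linf Γ, (∀ x, |g x| ≤ f x) → ξ g ≤ C) : q ξ f ≤ C :=
  csSup_le ⟨0, zero_mem_S ξ hf⟩ (by rintro r ⟨g, hg, rfl⟩; exact h g hg)

end InvMeanAux

namespace InvMeanAux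
set_option linter.unusedSectionVars false

variable {Γ : Type*} [Group Γ] (ξ : Linf Γ →L[ℝ] ℝ)

lemma add_apply (f g : Linf Γ) (x : Γ) : (f + g) x = f x + g x := by
  rw [lp.coeFn_add]; rfl

lemma sub_apply (f g : Linf Γ) (x : Γ) : (f - g) x = f x - g x := by
  rw [lp.coeFn_sub]; rfl

lemma neg_apply (f : Linf Γ) (x : Γ) : (-f) x = -(f x) := by
  rw [lp.coeFn_neg]; rfl

lemma smul_apply (t : ℝ) (f : Linf Γ) (x : Γ) : (t • f) x = t * f x := by
  rw [lp.coeFn_smul]; rfl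

lemma clamp_le {a b c : ℝ} (ha : 0 ≤ a) (hb : 0 ≤ b) (hc : |c| ≤ a + b) :
    |max (-a) (min a c)| ≤ a ∧ |c - max (-a) (min a c)| ≤ b := by
  rw [abs_le] at hc
  constructor <;> rw [abs_le] <;> constructor <;>
    simp only [max_def, min_def] <;> split_ifs <;> linarith

lemma q_add {f₁ f₂ : Linf Γ} (h₁ : ∀ x, 0 ≤ f₁ x) (h₂ : ∀ x, 0 ≤ f₂ x) :
    q ξ (f₁ + f₂) = q ξ f₁ + q ξ f₂ := by
  have h12 : ∀ x, 0 ≤ (f₁ + f₂) x := fun x => by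
    rw [add_apply]; exact add_nonneg (h₁ x) (h₂ x)
  apply le_antisymm
  · refine q_le ξ h12 fun g hg => ?_
    -- decompose g
    set v : Γ → ℝ := fun x => max (-(f₁ x)) (min (f₁ x) (g x)) with hv
    have hvle : ∀ x, |v x| ≤ f₁ x := fun x =>
      (clamp_le (h₁ x) (h₂ x) (by simpa [add_apply] using hg x)).1
    have hmem : Memℓp v ∞ := by
      apply memℓp_infty
      refine ⟨‖f₁‖, ?_⟩
      rintro r ⟨x, rfl⟩
      calc ‖v x‖ = |v x| := Real.norm_eq_abs _
        _ ≤ f₁ x := hvle x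
        _ ≤ |f₁ x| := le_abs_self _
        _ ≤ ‖f₁‖ := abs_apply_le_norm f₁ x
    set g₁ : Linf Γ := ⟨v, hmem⟩ with hg₁
    have hg₁le : ∀ x, |g₁ x| ≤ f₁ x := hvle
    have hg₂le : ∀ x, |(g - g₁) x| ≤ f₂ x := fun x => by
      rw [sub_apply]
      exact (clamp_le (h₁ x) (h₂ x) (by simpa [add_apply] using hg x)).2
    have : ξ g = ξ g₁ + ξ (g - g₁) := by rw [← map_add]; congr 1; abel
    rw [this]
    exact add_le_add (le_q ξ hg₁le) (le_q ξ hg₂le)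
  · have key : ∀ r₁ ∈ S ξ f₁, ∀ r₂ ∈ S ξ f₂, r₁ + r₂ ≤ q ξ (f₁ + f₂) := by
      rintro _ ⟨g₁, hg₁, rfl⟩ _ ⟨g₂, hg₂, rfl⟩
      rw [← map_add]
      refine le_q ξ fun x => ?_
      rw [add_apply, add_apply]
      exact (abs_add_le _ _).trans (add_le_add (hg₁ x) (hg₂ x))
    have step : ∀ r₁ ∈ S ξ f₁, r₁ + q ξ f₂ ≤ q ξ (f₁ + f₂) := fun r₁ hr₁ => by
      have : q ξ f₂ ≤ q ξ (f₁ + f₂) - r₁ :=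
        csSup_le ⟨0, zero_mem_S ξ h₂⟩ fun r₂ hr₂ => by linarith [key r₁ hr₁ r₂ hr₂]
      linarith
    have : q ξ f₁ ≤ q ξ (f₁ + f₂) - q ξ f₂ :=
      csSup_le ⟨0, zero_mem_S ξ h₁⟩ fun r₁ hr₁ => by linarith [step r₁ hr₁]
    linarith

lemma q_zero : q ξ (0 : Linf Γ) = 0 := by
  apply le_antisymm
  · refine q_le ξ (fun x => le_refl 0) fun g hg => ?_
    have : g = 0 := by
      ext x
      have := hg x
      simp only [lp.coeFn_zero, Pi.zero_apply] at this ⊢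
      exact abs_nonpos_iff.mp (by simpa using this)
    rw [this, map_zero]
  · exact q_nonneg ξ fun x => le_refl 0

lemma q_smul_le {t : ℝ} (ht : 0 < t) {f : Linf Γ} (hf : ∀ x, 0 ≤ f x) :
    q ξ (t • f) ≤ t * q ξ f := by
  refine q_le ξ (fun x => by rw [smul_apply]; exact mul_nonneg ht.le (hf x)) fun g hg => ?_
  have : g = t • (t⁻¹ • g) := (smul_inv_smul₀ ht.ne' g).symm
  rw [this, map_smul, smul_eq_mul]
  refine mul_le_mul_of_nonneg_left (le_q ξ fun x => ?_) ht.le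
  rw [smul_apply, abs_mul, abs_of_nonneg (inv_nonneg.mpr ht.le)]
  rw [inv_mul_le_iff₀ ht]
  calc |g x| ≤ (t • f) x := hg x
    _ = t * f x := smul_apply t f x

lemma q_smul {t : ℝ} (ht : 0 ≤ t) {f : Linf Γ} (hf : ∀ x, 0 ≤ f x) :
    q ξ (t • f) = t * q ξ f := by
  rcases ht.eq_or_lt with rfl | ht
  · rw [zero_smul, q_zero, zero_mul]
  · refine le_antisymm (q_smul_le ξ ht hf) ?_
    have h2 : q ξ f ≤ t⁻¹ * q ξ (t • f) := by
      have := q_smul_le ξ (inv_pos.mpr ht) (f := t • f)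
        (fun x => by rw [smul_apply]; exact mul_nonneg ht.le (hf x))
      rwa [inv_smul_smul₀ ht.ne'] at this
    calc t * q ξ f ≤ t * (t⁻¹ * q ξ (t • f)) := mul_le_mul_of_nonneg_left h2 ht.le
      _ = q ξ (t • f) := by field_simp

end InvMeanAux

namespace InvMeanAux
set_option linter.unusedSectionVars false

variable {Γ : Type*} [Group Γ] (ξ : Linf Γ →L[ℝ] ℝ)

lemma linf_ext {f g : Linf Γ} (h : ∀ x, f x = g x) : f = g :=
  lp.ext (funext h)

lemma const_smul_one (c : ℝ) : c • const Γ 1 = const Γ c := by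
  refine linf_ext fun x => ?_
  rw [smul_apply, const_apply, const_apply, mul_one]

lemma const_nonneg {c : ℝ} (hc : 0 ≤ c) : ∀ x : Γ, 0 ≤ (const Γ c) x := fun _ => hc

lemma nonneg_shift (f : Linf Γ) : ∀ x, 0 ≤ (f + const Γ ‖f‖) x := fun x => by
  rw [add_apply, const_apply]
  have := (abs_le.mp (abs_apply_le_norm f x)).1
  linarith

/-- The "absolute value" functional of `ξ`. -/
def LL (f : Linf Γ) : ℝ := q ξ (f + const Γ ‖f‖) - ‖f‖ * q ξ (const Γ 1)

lemma q_shift (f : Linf Γ) {c d : ℝ} (hc : ∀ x, 0 ≤ f x + c) (hcd : c ≤ d) :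
    q ξ (f + const Γ d) = q ξ (f + const Γ c) + (d - c) * q ξ (const Γ 1) := by
  have hsplit : f + const Γ d = (f + const Γ c) + (d - c) • const Γ 1 := by
    rw [const_smul_one]
    refine linf_ext fun x => ?_
    rw [add_apply, add_apply, add_apply, const_apply, const_apply, const_apply]
    ring
  have h1 : ∀ x, 0 ≤ (f + const Γ c) x := fun x => by
    rw [add_apply, const_apply]; exact hc x
  have h2 : ∀ x, 0 ≤ ((d - c) • const Γ 1) x := fun x => by
    rw [smul_apply, const_apply]; linarith
  rw [hsplit, q_add ξ h1 h2, q_smul ξ (by linarith) (const_nonneg zero_le_one)]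

lemma LL_eq {f : Linf Γ} {c : ℝ} (hc : ∀ x, 0 ≤ f x + c) :
    LL ξ f = q ξ (f + const Γ c) - c * q ξ (const Γ 1) := by
  have hn : ∀ x, 0 ≤ f x + ‖f‖ := fun x => by
    have := nonneg_shift f x; rwa [add_apply, const_apply] at this
  rcases le_total c ‖f‖ with h | h
  · rw [LL, q_shift ξ f hc h]; ring
  · rw [LL, q_shift ξ f hn h]; ring

lemma LL_of_nonneg {f : Linf Γ} (hf : ∀ x, 0 ≤ f x) : LL ξ f = q ξ f := by
  rw [LL_eq ξ (c := 0) (fun x => by simpa using hf x)]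
  simp only [zero_mul, sub_zero]
  congr 1
  exact linf_ext fun x => by rw [add_apply, const_apply, add_zero]

lemma LL_add (f g : Linf Γ) : LL ξ (f + g) = LL ξ f + LL ξ g := by
  have hf : ∀ x, 0 ≤ f x + ‖f‖ := fun x => by
    have := nonneg_shift f x; rwa [add_apply, const_apply] at this
  have hg : ∀ x, 0 ≤ g x + ‖g‖ := fun x => by
    have := nonneg_shift g x; rwa [add_apply, const_apply] at this
  have hfg : ∀ x, 0 ≤ (f + g) x + (‖f‖ + ‖g‖) := fun x => by
    rw [add_apply]; have := hf x; have := hg x; linarith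
  rw [LL_eq ξ hfg, LL_eq ξ hf, LL_eq ξ hg]
  have hsplit : (f + g) + const Γ (‖f‖ + ‖g‖) = (f + const Γ ‖f‖) + (g + const Γ ‖g‖) := by
    refine linf_ext fun x => ?_
    simp only [add_apply, const_apply]
    ring
  rw [hsplit, q_add ξ (fun x => by rw [add_apply, const_apply]; exact hf x)
    (fun x => by rw [add_apply, const_apply]; exact hg x)]
  ring

lemma LL_neg (f : Linf Γ) : LL ξ (-f) = -LL ξ f := by
  have hf : ∀ x, 0 ≤ f x + ‖f‖ := fun x => by
    have := nonneg_shift f x; rwa [add_apply, const_apply] at this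
  have hnf : ∀ x, 0 ≤ (-f) x + ‖f‖ := fun x => by
    rw [lp.coeFn_neg, Pi.neg_apply]
    have := (abs_le.mp (abs_apply_le_norm f x)).2; linarith
  have hsum : (f + const Γ ‖f‖) + (-f + const Γ ‖f‖) = (2 * ‖f‖) • const Γ 1 := by
    rw [const_smul_one]
    refine linf_ext fun x => ?_
    simp only [add_apply, neg_apply, const_apply]
    ring
  have hq : q ξ (f + const Γ ‖f‖) + q ξ (-f + const Γ ‖f‖) = 2 * ‖f‖ * q ξ (const Γ 1) := by
    rw [← q_add ξ (fun x => by rw [add_apply, const_apply]; exact hf x)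
      (fun x => by rw [add_apply, const_apply]; exact hnf x), hsum,
      q_smul ξ (by positivity) (const_nonneg zero_le_one)]
  rw [LL_eq ξ hnf, LL_eq ξ hf]
  linarith

lemma LL_smul (t : ℝ) (f : Linf Γ) : LL ξ (t • f) = t * LL ξ f := by
  have key : ∀ s : ℝ, 0 ≤ s → LL ξ (s • f) = s * LL ξ f := by
    intro s hs
    have hf : ∀ x, 0 ≤ f x + ‖f‖ := fun x => by
      have := nonneg_shift f x; rwa [add_apply, const_apply] at this
    have hsf : ∀ x, 0 ≤ (s • f) x + s * ‖f‖ := fun x => by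
      rw [smul_apply]
      have := hf x; nlinarith
    rw [LL_eq ξ hsf]
    have hsplit : s • f + const Γ (s * ‖f‖) = s • (f + const Γ ‖f‖) := by
      refine linf_ext fun x => ?_
      rw [add_apply, smul_apply, smul_apply, add_apply, const_apply, const_apply]
      ring
    rw [hsplit, q_smul ξ hs (fun x => by rw [add_apply, const_apply]; exact hf x),
      LL_eq ξ hf]
    ring
  rcases le_total 0 t with ht | ht
  · exact key t ht
  · have : t • f = -((-t) • f) := by rw [neg_smul, neg_neg]
    rw [this, LL_neg, key (-t) (by linarith)]
    ring

end InvMeanAux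

namespace InvMeanAux
set_option linter.unusedSectionVars false

variable {Γ : Type*} [Group Γ] (ξ : Linf Γ →L[ℝ] ℝ)

/-- Left translation on `ℓ∞(Γ)`. -/
def transl (h : Γ) (f : Linf Γ) : Linf Γ :=
  ⟨fun x => f (h⁻¹ * x), memℓp_infty ⟨‖f‖, by
    rintro r ⟨x, rfl⟩
    exact (abs_apply_le_norm f _)⟩⟩

@[simp] lemma transl_apply (h : Γ) (f : Linf Γ) (x : Γ) : transl h f x = f (h⁻¹ * x) := rfl

variable {h : Γ}

lemma S_transl (hinv : ∀ f f' : Linf Γ, (∀ x : Γ, f' x = f (h⁻¹ * x)) → ξ f' = ξ f)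
    (f : Linf Γ) : S ξ (transl h f) = S ξ f := by
  ext r
  constructor
  · rintro ⟨g', hg', rfl⟩
    refine ⟨transl h⁻¹ g', fun x => ?_, ?_⟩
    · have := hg' (h * x)
      simp only [transl_apply, inv_mul_cancel_left, inv_inv] at this ⊢
      exact this
    · exact (hinv (transl h⁻¹ g') g' (fun x => by
        simp only [transl_apply, inv_inv, mul_inv_cancel_left])).symm
  · rintro ⟨g, hg, rfl⟩
    exact ⟨transl h g, fun x => hg _, hinv g (transl h g) (fun x => rfl)⟩

lemma q_transl (hinv : ∀ f f' : Linf Γ, (∀ x : Γ, f' x = f (h⁻¹ * x)) → ξ f' = ξ f)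
    (f : Linf Γ) : q ξ (transl h f) = q ξ f := by
  unfold q
  rw [S_transl ξ hinv]

lemma LL_transl (hinv : ∀ f f' : Linf Γ, (∀ x : Γ, f' x = f (h⁻¹ * x)) → ξ f' = ξ f)
    (f : Linf Γ) : LL ξ (transl h f) = LL ξ f := by
  have hf : ∀ x, 0 ≤ f x + ‖f‖ := fun x => by
    have := nonneg_shift f x; rwa [add_apply, const_apply] at this
  have htf : ∀ x, 0 ≤ (transl h f) x + ‖f‖ := fun x => hf _
  rw [LL_eq ξ htf, LL_eq ξ hf]
  have hsplit : transl h f + const Γ ‖f‖ = transl h (f + const Γ ‖f‖) := by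
    refine linf_ext fun x => ?_
    simp only [add_apply, transl_apply, const_apply]
  rw [hsplit, q_transl ξ hinv]

lemma q_one_pos (hξ : ξ ≠ 0) : 0 < q ξ (const Γ 1) := by
  obtain ⟨f, hf⟩ : ∃ f : Linf Γ, 0 < ξ f := by
    by_contra hcon
    push_neg at hcon
    apply hξ
    ext g
    have h1 := hcon g
    have h2 := hcon (-g)
    rw [map_neg] at h2
    simp only [ContinuousLinearMap.zero_apply]
    linarith
  have hf0 : f ≠ 0 := fun h0 => by simp [h0] at hf
  have hnorm : 0 < ‖f‖ := norm_pos_iff.mpr hf0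
  have hg : ∀ x, |(‖f‖⁻¹ • f) x| ≤ (const Γ 1) x := fun x => by
    rw [smul_apply, const_apply, abs_mul, abs_of_nonneg (inv_nonneg.mpr hnorm.le),
      inv_mul_le_iff₀ hnorm, mul_one]
    exact abs_apply_le_norm f x
  have hle := le_q ξ hg
  rw [map_smul, smul_eq_mul] at hle
  have hpos : 0 < ‖f‖⁻¹ * ξ f := mul_pos (inv_pos.mpr hnorm) hf
  linarith

lemma LL_one : LL ξ (const Γ 1) = q ξ (const Γ 1) :=
  LL_of_nonneg ξ (const_nonneg zero_le_one)

lemma LL_const (c : ℝ) : LL ξ (const Γ c) = c * q ξ (const Γ 1) := by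
  rw [← const_smul_one, LL_smul, LL_one]

lemma LL_sub (f g : Linf Γ) : LL ξ (f - g) = LL ξ f - LL ξ g := by
  rw [sub_eq_add_neg, LL_add, LL_neg, ← sub_eq_add_neg]

end InvMeanAux

open InvMeanAux

/-- There exists a left `H`-invariant mean on `ℓ∞(Γ, ℝ)` if and only if
there exists a non-trivial `H`-invariant continuous linear functional on `ℓ∞(Γ, ℝ)`.
Here `H` acts by left translation `(h • f) x = f (h⁻¹ * x)` and a functional `ξ` is
`H`-invariant when `ξ (h • f) = ξ f`. -/
theorem exists_invariant_mean_iff_exists_invariant_functional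
    {Γ : Type*} [Group Γ] (H : Subgroup Γ) :
    (∃ m : Linf Γ →ₗ[ℝ] ℝ, IsMean Γ m ∧
        ∀ h ∈ H, ∀ f f' : Linf Γ, (∀ x : Γ, f' x = f (h⁻¹ * x)) → m f' = m f) ↔
      (∃ ξ : Linf Γ →L[ℝ] ℝ, ξ ≠ 0 ∧
        ∀ h ∈ H, ∀ f f' : Linf Γ, (∀ x : Γ, f' x = f (h⁻¹ * x)) → ξ f' = ξ f) := by
  haveI : Nonempty Γ := ⟨1⟩
  constructor
  · rintro ⟨m, hm, hminv⟩
    have hbound : ∀ f : Linf Γ, ‖m f‖ ≤ 1 * ‖f‖ := by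
      intro f
      rw [one_mul, Real.norm_eq_abs, abs_le]
      obtain ⟨h1, h2⟩ := hm f
      have hne : (Set.range (f : Γ → ℝ)).Nonempty := ⟨f 1, ⟨1, rfl⟩⟩
      constructor
      · refine le_trans (le_csInf hne ?_) h1
        rintro r ⟨x, rfl⟩
        exact (abs_le.mp (abs_apply_le_norm f x)).1
      · refine h2.trans (csSup_le hne ?_)
        rintro r ⟨x, rfl⟩
        exact (abs_le.mp (abs_apply_le_norm f x)).2
    refine ⟨LinearMap.mkContinuous m 1 hbound, ?_, ?_⟩
    · intro h0
      have h1 : m (const Γ 1) = 1 := by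
        obtain ⟨ha, hb⟩ := hm (const Γ 1)
        have hr : Set.range ((const Γ 1 : Linf Γ) : Γ → ℝ) = {(1 : ℝ)} :=
          Set.range_const
        rw [hr, csInf_singleton] at ha
        rw [hr, csSup_singleton] at hb
        linarith
      have h2 : m (const Γ 1) = 0 := by
        have := congrFun (congrArg DFunLike.coe h0) (const Γ 1)
        simpa [LinearMap.mkContinuous_apply] using this
      rw [h1] at h2
      exact one_ne_zero h2
    · intro h hH f f' hff'
      simpa [LinearMap.mkContinuous_apply] using hminv h hH f f' hff'
  · rintro ⟨ξ, hξ0, hξinv⟩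
    have hc : 0 < q ξ (const Γ 1) := q_one_pos ξ hξ0
    set c := q ξ (const Γ 1) with hcdef
    refine ⟨{ toFun := fun f => c⁻¹ * LL ξ f,
              map_add' := fun f g => by rw [LL_add]; ring,
              map_smul' := fun t f => by
                simp only [RingHom.id_apply, smul_eq_mul]; rw [LL_smul]; ring }, ?_, ?_⟩
    · intro f
      simp only [LinearMap.coe_mk, AddHom.coe_mk]
      have hne : (Set.range (f : Γ → ℝ)).Nonempty := ⟨f 1, ⟨1, rfl⟩⟩
      have hba : BddAbove (Set.range (f : Γ → ℝ)) := by
        refine ⟨‖f‖, ?_⟩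
        rintro r ⟨x, rfl⟩
        exact (abs_le.mp (abs_apply_le_norm f x)).2
      have hbb : BddBelow (Set.range (f : Γ → ℝ)) := by
        refine ⟨-‖f‖, ?_⟩
        rintro r ⟨x, rfl⟩
        exact (abs_le.mp (abs_apply_le_norm f x)).1
      set s := sSup (Set.range (f : Γ → ℝ))
      set i := sInf (Set.range (f : Γ → ℝ))
      have hs : ∀ x, f x ≤ s := fun x => le_csSup hba ⟨x, rfl⟩
      have hi : ∀ x, i ≤ f x := fun x => csInf_le hbb ⟨x, rfl⟩
      have hupper : LL ξ f ≤ s * c := by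
        have hpos : ∀ x, 0 ≤ (const Γ s - f) x := fun x => by
          rw [InvMeanAux.sub_apply, const_apply]; linarith [hs x]
        have h0 : 0 ≤ LL ξ (const Γ s - f) := by
          rw [LL_of_nonneg ξ hpos]; exact q_nonneg ξ hpos
        rw [LL_sub, LL_const] at h0
        linarith
      have hlower : i * c ≤ LL ξ f := by
        have hpos : ∀ x, 0 ≤ (f - const Γ i) x := fun x => by
          rw [InvMeanAux.sub_apply, const_apply]; linarith [hi x]
        have h0 : 0 ≤ LL ξ (f - const Γ i) := by
          rw [LL_of_nonneg ξ hpos]; exact q_nonneg ξ hpos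
        rw [LL_sub, LL_const] at h0
        linarith
      constructor
      · rw [le_inv_mul_iff₀ hc]
        linarith [hlower]
      · rw [inv_mul_le_iff₀ hc]
        linarith [hupper]
    · intro h hH f f' hff'
      simp only [LinearMap.coe_mk, AddHom.coe_mk]
      have : f' = transl h f := linf_ext hff'
      rw [this, LL_transl ξ (hξinv h hH) f]
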